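/- Consider an arbitrary root-to-leaf path of the tree of ranks under the ranking protocol based on rule R₁ with the uniform random scheduler on n agents. If the path is balanced, then with high probability within parallel time O(n·log n) the protocol stabilises evenly on the path (each node of the path occupied by exactly one agent); if the path is overloaded, then with high probability within parallel time O(n·log n) the leaf of the path becomes overloaded (occupied by at least two agents). -/

import Mathlib

open Classical Finset

/-- An ordered pair of distinct agents (initiator, responder) chosen by the scheduler. -/
abbrev SchedPair (n : ℕ) : Type := {p : Fin n × Fin n // p.1 ≠ p.2}

/-- One interaction step: the scheduler selects the ordered pair `p` of distinct agents
(initiator `p.1.1`, responder `p.1.2`) and they update their states via the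
transition function `δ`. -/
def pstep {S : Type} {n : ℕ} (δ : S → S → S × S) (c : Fin n → S) (p : SchedPair n) :
    Fin n → S := fun a =>
  if a = p.1.1 then (δ (c p.1.1) (c p.1.2)).1
  else if a = p.1.2 then (δ (c p.1.1) (c p.1.2)).2
  else c a

/-- The configuration after the first `t` interactions of the finite schedule `σ`. -/
def configAt {S : Type} {n T : ℕ} (δ : S → S → S × S) (c0 : Fin n → S)
    (σ : Fin T → SchedPair n) (t : ℕ) : Fin n → S :=
  ((List.ofFn σ).take t).foldl (pstep δ) c0

/-- Probability of the event `E` under the uniform random scheduler running for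
`T` interactions (interactions are drawn independently and uniformly at random). -/
noncomputable def schedPr {n : ℕ} (T : ℕ) (E : (Fin T → SchedPair n) → Prop) : ℝ :=
  (((Finset.univ : Finset (Fin T → SchedPair n)).filter fun σ => E σ).card : ℝ) /
    ((Finset.univ : Finset (Fin T → SchedPair n)).card : ℝ)

/-- The infinite trajectory generated by the schedule `σ` from configuration `c0`. -/
def ptraj {S : Type} {n : ℕ} (δ : S → S → S × S) (c0 : Fin n → S)
    (σ : ℕ → SchedPair n) : ℕ → Fin n → S
  | 0 => c0
  | t + 1 => pstep δ (ptraj δ c0 σ t) (σ t)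

/-- `subSize k j` is the size of the subtree rooted at the node with pre-order index
`j` in the perfectly balanced binary tree of size `k` (0 if `j` is out of range).
For odd `k = 2l+1` the root is branching, with two identical subtrees of size `l`
(pre-order offsets `1..l` and `l+1..2l`); for even `k` the root is non-branching,
with a single child rooting a tree of size `k-1`. -/
def subSize : ℕ → ℕ → ℕ
  | 0, _ => 0
  | k + 1, 0 => k + 1
  | k + 1, j + 1 =>
    if (k + 1) % 2 = 1 then
      if j < (k + 1) / 2 then subSize ((k + 1) / 2) j
      else subSize ((k + 1) / 2) (j - (k + 1) / 2)
    else subSize k j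
  termination_by k j => k
  decreasing_by all_goals omega

/-- Rule `R₁` of the tree-of-ranks protocol on the `n` rank states `0,…,n-1`
(identified with the nodes of the perfectly balanced binary tree of size `n` in
pre-order): `p + p → p + (p+1)` when `p` is a non-branching node, and
`p + p → (p+1) + (p+l+1)` when `p` is a branching node with child subtrees of
size `l`; no other pair of states interacts. -/
def treeDelta (n : ℕ) : ℕ → ℕ → ℕ × ℕ := fun p q =>
  if p = q then
    if subSize n p % 2 = 0 ∧ subSize n p ≠ 0 then (p, p + 1)
    else if 1 < subSize n p then (p + 1, p + subSize n p / 2 + 1)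
    else (p, q)
  else (p, q)

/-- A schedule is fair if every ordered pair of distinct agents is selected
infinitely often. -/
def Fair {n : ℕ} (σ : ℕ → SchedPair n) : Prop :=
  ∀ p : SchedPair n, ∀ t, ∃ t', t ≤ t' ∧ σ t' = p

/-- `q` is a child of `p` in the tree of ranks of size `n`. -/
def IsChild (n p q : ℕ) : Prop :=
  (subSize n p % 2 = 0 ∧ subSize n p ≠ 0 ∧ q = p + 1) ∨
  (subSize n p % 2 = 1 ∧ 1 < subSize n p ∧ (q = p + 1 ∨ q = p + subSize n p / 2 + 1))

/-- `P` is a root-to-leaf path of the tree of ranks of size `n`, ending at the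
leaf `lf`. -/
def RootToLeaf (n : ℕ) (P : List ℕ) (lf : ℕ) : Prop :=
  P.head? = some 0 ∧ List.Chain' (IsChild n) P ∧ P.getLast? = some lf ∧ subSize n lf = 1

/-- The path `P` is balanced for the initial configuration `c0`: the protocol based
on rule `R₁` stabilises silently with every node of the path occupied by exactly
one agent (under every fair schedule). -/
def BalancedPath (n : ℕ) (c0 : Fin n → ℕ) (P : List ℕ) : Prop :=
  ∀ σ : ℕ → SchedPair n, Fair σ →
    ∃ T, ∀ t, T ≤ t → ∀ p ∈ P, ∃! a, ptraj (treeDelta n) c0 σ t a = p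

/-- The path ending in the leaf `lf` is overloaded for the initial configuration
`c0`: the protocol based on rule `R₁` leads (under every fair schedule) to a
configuration in which the leaf `lf` becomes occupied by at least two agents. -/
def OverloadedPath (n : ℕ) (c0 : Fin n → ℕ) (lf : ℕ) : Prop :=
  ∀ σ : ℕ → SchedPair n, Fair σ →
    ∃ t, ∃ a b : Fin n, a ≠ b ∧
      ptraj (treeDelta n) c0 σ t a = lf ∧ ptraj (treeDelta n) c0 σ t b = lf


theorem subSize_eq_zero : ∀ k j, k ≤ j → subSize k j = 0 := by
  intro k
  induction k using Nat.strong_induction_on with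
  | _ k ih =>
    intro j hj
    match k, j with
    | 0, j => rw [subSize]
    | k+1, j+1 =>
      rw [subSize]
      split
      · split
        · exfalso; omega
        · exact ih ((k+1)/2) (by omega) _ (by omega)
      · exact ih k (by omega) j (by omega)

theorem subSize_pos : ∀ k j, j < k → 0 < subSize k j := by
  intro k
  induction k using Nat.strong_induction_on with
  | _ k ih =>
    intro j hj
    match k, j with
    | k+1, 0 => rw [subSize]; omega
    | k+1, j+1 =>
      rw [subSize]
      split
      · rename_i hodd
        split
        · exact ih ((k+1)/2) (by omega) _ (by assumption)
        · exact ih ((k+1)/2) (by omega) _ (by omega)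
      · rename_i heven
        exact ih k (by omega) j (by omega)

theorem subSize_root : ∀ k, 1 ≤ k → subSize k 0 = k := by
  intro k hk
  match k, hk with
  | k+1, _ => rw [subSize]

theorem subSize_last : ∀ k, subSize (k+1) k = 1 := by
  intro k
  induction k using Nat.strong_induction_on with
  | _ k ih =>
    match k with
    | 0 => rw [subSize]
    | k+1 =>
      rw [subSize]
      split
      · rename_i hodd
        split
        · exfalso; omega
        · rename_i hlt
          obtain ⟨m, hm⟩ : ∃ m, (k+1+1)/2 = m+1 := ⟨(k+1+1)/2 - 1, by omega⟩
          rw [hm]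
          rw [show k - (m+1) = m by omega]
          exact ih m (by omega)
      · exact ih k (by omega)

theorem subSize_children : ∀ k j, 2 ≤ subSize k j →
    (subSize k j % 2 = 0 → subSize k (j+1) = subSize k j - 1) ∧
    (subSize k j % 2 = 1 → subSize k (j+1) = subSize k j / 2 ∧
      subSize k (j + subSize k j / 2 + 1) = subSize k j / 2) := by
  intro k
  induction k using Nat.strong_induction_on with
  | _ k ih =>
    intro j hs
    match k, j with
    | 0, j => rw [subSize] at hs; omega
    | k+1, 0 =>
      have hroot : subSize (k+1) 0 = k+1 := subSize_root _ (by omega)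
      rw [hroot] at hs ⊢
      constructor
      · intro hev
        rw [show (0:ℕ)+1 = 0+1 from rfl, subSize, if_neg (by omega)]
        obtain ⟨m, hm⟩ : ∃ m, k = m+1 := ⟨k - 1, by omega⟩
        subst hm
        rw [subSize_root _ (by omega)]
        omega
      · intro hodd
        constructor
        · rw [subSize, if_pos (by omega), if_pos (by omega)]
          exact subSize_root _ (by omega)
        · rw [show 0 + (k+1)/2 + 1 = ((k+1)/2) + 1 by omega]
          rw [subSize, if_pos (by omega), if_neg (by omega)]
          rw [show (k+1)/2 - (k+1)/2 = 0 by omega]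
          exact subSize_root _ (by omega)
    | k+1, j+1 =>
      rw [subSize] at hs
      by_cases hodd : (k+1) % 2 = 1
      · rw [if_pos hodd] at hs
        by_cases hj : j < (k+1)/2
        · rw [if_pos hj] at hs
          -- s = subSize ((k+1)/2) j, within left subtree
          have IH := ih ((k+1)/2) (by omega) j hs
          -- value of s at current node:
          have hcur : subSize (k+1) (j+1) = subSize ((k+1)/2) j := by
            rw [subSize, if_pos hodd, if_pos hj]
          set s := subSize ((k+1)/2) j with hsdef
          -- child indices are still inside the left subtree
          have hchild1pos : 0 < subSize ((k+1)/2) (j+1) := by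
            rcases Nat.even_or_odd s with he | ho
            · rw [IH.1 (Nat.even_iff.mp he)]; omega
            · rw [(IH.2 (Nat.odd_iff.mp ho)).1]; omega
          have hj1 : j + 1 < (k+1)/2 := by
            by_contra hcon
            rw [subSize_eq_zero _ _ (by omega)] at hchild1pos; omega
          constructor
          · intro hev
            rw [hcur] at hev ⊢
            rw [subSize, if_pos hodd, if_pos hj1]
            exact IH.1 hev
          · intro hop
            rw [hcur] at hop ⊢
            have hchild2pos : 0 < subSize ((k+1)/2) (j + s/2 + 1) := by
              rw [(IH.2 hop).2]; omega
            have hj2 : j + s/2 + 1 < (k+1)/2 := by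
              by_contra hcon
              rw [subSize_eq_zero _ _ (by omega)] at hchild2pos; omega
            constructor
            · rw [subSize, if_pos hodd, if_pos hj1]
              exact (IH.2 hop).1
            · rw [show j + 1 + s/2 + 1 = (j + s/2 + 1) + 1 by omega]
              rw [subSize, if_pos hodd, if_pos hj2]
              exact (IH.2 hop).2
        · rw [if_neg hj] at hs
          have IH := ih ((k+1)/2) (by omega) (j - (k+1)/2) hs
          have hcur : subSize (k+1) (j+1) = subSize ((k+1)/2) (j - (k+1)/2) := by
            rw [subSize, if_pos hodd, if_neg hj]
          set s := subSize ((k+1)/2) (j - (k+1)/2) with hsdef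
          constructor
          · intro hev
            rw [hcur] at hev ⊢
            rw [subSize, if_pos hodd, if_neg (by omega)]
            rw [show j + 1 - (k+1)/2 = (j - (k+1)/2) + 1 by omega]
            exact IH.1 hev
          · intro hop
            rw [hcur] at hop ⊢
            constructor
            · rw [subSize, if_pos hodd, if_neg (by omega)]
              rw [show j + 1 - (k+1)/2 = (j - (k+1)/2) + 1 by omega]
              exact (IH.2 hop).1
            · rw [show j + 1 + s/2 + 1 = (j + s/2 + 1) + 1 by omega]
              rw [subSize, if_pos hodd, if_neg (by omega)]
              rw [show j + s/2 + 1 - (k+1)/2 = (j - (k+1)/2) + s/2 + 1 by omega]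
              exact (IH.2 hop).2
      · rw [if_neg hodd] at hs
        have IH := ih k (by omega) j hs
        have hcur : subSize (k+1) (j+1) = subSize k j := by
          rw [subSize, if_neg hodd]
        set s := subSize k j with hsdef
        constructor
        · intro hev
          rw [hcur] at hev ⊢
          rw [subSize, if_neg hodd]
          exact IH.1 hev
        · intro hop
          rw [hcur] at hop ⊢
          constructor
          · rw [subSize, if_neg hodd]
            exact (IH.2 hop).1
          · rw [show j + 1 + s/2 + 1 = (j + s/2 + 1) + 1 by omega]
            rw [subSize, if_neg hodd]
            exact (IH.2 hop).2

/-- Weight of a subtree size. -/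
def wted (s : ℕ) : ℕ := if s ≤ 1 then 0 else 9 ^ (Nat.clog 2 s) * (if s % 2 = 0 then 3 else 1)

theorem wted_pos {s : ℕ} (hs : 2 ≤ s) : 1 ≤ wted s := by
  rw [wted, if_neg (by omega)]
  have h9 : 1 ≤ 9 ^ (Nat.clog 2 s) := Nat.one_le_pow _ _ (by norm_num)
  split <;> nlinarith

theorem wted_child_even {s : ℕ} (hs : 2 ≤ s) (he : s % 2 = 0) :
    3 * wted (s - 1) ≤ wted s := by
  by_cases h1 : s - 1 ≤ 1
  · rw [wted, if_pos h1]
    simp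
  · rw [wted, wted, if_neg h1, if_neg (by omega), if_neg (by omega), if_pos he]
    have hm : Nat.clog 2 (s-1) ≤ Nat.clog 2 s := Nat.clog_mono_right 2 (by omega)
    have : (9:ℕ) ^ Nat.clog 2 (s-1) ≤ 9 ^ Nat.clog 2 s := Nat.pow_le_pow_right (by norm_num) hm
    nlinarith

theorem wted_child_odd {s : ℕ} (hs : 2 ≤ s) (ho : s % 2 = 1) :
    3 * wted (s / 2) ≤ wted s := by
  have hs3 : 3 ≤ s := by omega
  by_cases h1 : s / 2 ≤ 1
  · rw [wted, if_pos h1]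
    simp
  · have ht : 2 ≤ s / 2 := by omega
    have hclog : Nat.clog 2 (s / 2) + 1 ≤ Nat.clog 2 s := by
      have h2' : 2 ^ (Nat.clog 2 (s/2) - 1) < s / 2 :=
        Nat.pow_pred_clog_lt_self (by norm_num) (by omega)
      have h3' : 1 ≤ Nat.clog 2 (s/2) := Nat.succ_le_iff.mpr (Nat.clog_pos (by norm_num) ht)
      have h4' : 2 ^ Nat.clog 2 (s/2) < s := by
        have : 2 ^ Nat.clog 2 (s/2) = 2 * 2 ^ (Nat.clog 2 (s/2) - 1) := by
          rw [← pow_succ']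
          congr 1
          omega
        omega
      have : Nat.clog 2 (s/2) < Nat.clog 2 s :=
        (Nat.lt_clog_iff_pow_lt (by norm_num)).mpr h4'
      omega
    rw [wted, wted, if_neg (show ¬ s/2 ≤ 1 by omega), if_neg (show ¬ s ≤ 1 by omega),
      if_neg (show ¬ s % 2 = 0 by omega)]
    have key : (9:ℕ) ^ (Nat.clog 2 (s/2) + 1) ≤ 9 ^ Nat.clog 2 s :=
      Nat.pow_le_pow_right (by norm_num) hclog
    rw [pow_succ] at key
    split <;> nlinarith [key, Nat.zero_le (9 ^ Nat.clog 2 (s/2))]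

theorem subSize_le : ∀ k j, subSize k j ≤ k := by
  intro k
  induction k using Nat.strong_induction_on with
  | _ k ih =>
    intro j
    match k, j with
    | 0, j => rw [subSize]
    | k+1, 0 => rw [subSize]
    | k+1, j+1 =>
      rw [subSize]
      split
      · split
        · exact le_trans (ih ((k+1)/2) (by omega) _) (by omega)
        · exact le_trans (ih ((k+1)/2) (by omega) _) (by omega)
      · exact le_trans (ih k (by omega) j) (by omega)

theorem wted_le {n s : ℕ} (hn : 2 ≤ n) (hs : s ≤ n) : wted s ≤ 48 * n ^ 4 := by
  by_cases h1 : s ≤ 1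
  · rw [wted, if_pos h1]; positivity
  · rw [wted, if_neg h1]
    have h2 : 2 ≤ s := by omega
    have hc1 : 1 ≤ Nat.clog 2 s := Nat.succ_le_iff.mpr (Nat.clog_pos (by norm_num) (by omega))
    have hpred : 2 ^ (Nat.clog 2 s - 1) < s := Nat.pow_pred_clog_lt_self (by norm_num) (by omega)
    have h2c : 2 ^ Nat.clog 2 s ≤ 2 * n := by
      have : 2 ^ Nat.clog 2 s = 2 * 2 ^ (Nat.clog 2 s - 1) := by
        rw [← pow_succ']
        congr 1
        omega
      omega
    have h9 : (9:ℕ) ^ Nat.clog 2 s ≤ 16 * n ^ 4 := by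
      calc (9:ℕ) ^ Nat.clog 2 s ≤ 16 ^ Nat.clog 2 s :=
            Nat.pow_le_pow_left (by norm_num) _
        _ = (2 ^ Nat.clog 2 s) ^ 4 := by
            rw [show (16:ℕ) = 2^4 by norm_num, ← pow_mul, ← pow_mul, Nat.mul_comm]
        _ ≤ (2 * n) ^ 4 := Nat.pow_le_pow_left h2c 4
        _ = 16 * n ^ 4 := by ring
    split <;> nlinarith [Nat.zero_le (n ^ 4)]

/-- Number of agents in state `v`. -/
def fib {n : ℕ} (c : Fin n → ℕ) (v : ℕ) : ℕ :=
  ((Finset.univ : Finset (Fin n)).filter fun a => c a = v).card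

/-- Potential function. -/
def phi (n : ℕ) (c : Fin n → ℕ) : ℕ :=
  ∑ v ∈ Finset.range n, wted (subSize n v) * (fib c v - 1)

theorem fib_update {n : ℕ} (c : Fin n → ℕ) (a : Fin n) (u v : ℕ) :
    fib (Function.update c a u) v = fib c v - (if c a = v then 1 else 0)
      + (if u = v then 1 else 0) := by
  classical
  have hset : ((Finset.univ : Finset (Fin n)).filter fun b => Function.update c a u b = v) =
      if u = v then insert a (((Finset.univ : Finset (Fin n)).filter fun b => c b = v).erase a)
      else ((Finset.univ : Finset (Fin n)).filter fun b => c b = v).erase a := by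
    ext b
    by_cases hb : b = a
    · subst hb
      by_cases hu : u = v <;> simp [Function.update, hu]
    · by_cases hu : u = v <;> simp [Function.update, hb, hu]
  rw [fib, hset]
  have hcard : (((Finset.univ : Finset (Fin n)).filter fun b => c b = v).erase a).card =
      fib c v - (if c a = v then 1 else 0) := by
    rw [Finset.card_erase_eq_ite, fib]
    by_cases hca : c a = v <;> simp [hca]
  by_cases hu : u = v
  · rw [if_pos hu, if_pos hu, Finset.card_insert_of_notMem (Finset.notMem_erase _ _), hcard]
  · rw [if_neg hu, if_neg hu, hcard, Nat.add_zero]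

theorem phi_update_weak {n : ℕ} (c : Fin n → ℕ) (a : Fin n) (u : ℕ) :
    phi n (Function.update c a u) ≤ phi n c + wted (subSize n u) := by
  classical
  have key : ∀ v ∈ Finset.range n,
      wted (subSize n v) * (fib (Function.update c a u) v - 1) ≤
      wted (subSize n v) * (fib c v - 1) + (if u = v then wted (subSize n u) else 0) := by
    intro v _
    rw [fib_update]
    by_cases hv : u = v
    · rw [if_pos hv, if_pos hv, hv]
      by_cases hc : c a = v
      · rw [if_pos hc]
        refine le_trans (Nat.mul_le_mul_left _ (show fib c v - 1 + 1 - 1 ≤ fib c v - 1 by omega)) ?_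
        exact Nat.le_add_right _ _
      · rw [if_neg hc]
        calc wted (subSize n v) * (fib c v - 0 + 1 - 1)
            ≤ wted (subSize n v) * ((fib c v - 1) + 1) := Nat.mul_le_mul_left _ (by omega)
          _ = wted (subSize n v) * (fib c v - 1) + wted (subSize n v) := mul_add_one _ _
    · rw [if_neg hv, if_neg hv, add_zero]
      exact Nat.mul_le_mul_left _ (by split <;> omega)
  calc phi n (Function.update c a u)
      ≤ ∑ v ∈ Finset.range n,
        (wted (subSize n v) * (fib c v - 1) + (if u = v then wted (subSize n u) else 0)) :=
        Finset.sum_le_sum key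
    _ = phi n c + ∑ v ∈ Finset.range n, (if u = v then wted (subSize n u) else 0) := by
        rw [Finset.sum_add_distrib]; rfl
    _ ≤ phi n c + wted (subSize n u) := by
        gcongr
        rw [Finset.sum_ite_eq (Finset.range n) u (fun _ => wted (subSize n u))]
        split <;> omega

theorem phi_update_strong {n : ℕ} (c : Fin n → ℕ) (a : Fin n) (u : ℕ)
    (hca : c a < n) (hfib : 2 ≤ fib c (c a)) (hne : u ≠ c a) :
    phi n (Function.update c a u) + wted (subSize n (c a)) ≤ phi n c + wted (subSize n u) := by
  classical
  have key : ∀ v ∈ Finset.range n,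
      wted (subSize n v) * (fib (Function.update c a u) v - 1)
        + (if c a = v then wted (subSize n (c a)) else 0) ≤
      wted (subSize n v) * (fib c v - 1) + (if u = v then wted (subSize n u) else 0) := by
    intro v _
    rw [fib_update]
    by_cases hv1 : c a = v
    · have hu : ¬ u = v := fun h => hne (h.trans hv1.symm)
      rw [if_pos hv1, if_pos hv1, if_neg hu, if_neg hu, add_zero, hv1]
      have hfib' : 2 ≤ fib c v := by rw [← hv1]; exact hfib
      calc wted (subSize n v) * (fib c v - 1 + 0 - 1) + wted (subSize n v)
          = wted (subSize n v) * ((fib c v - 1 + 0 - 1) + 1) := (mul_add_one _ _).symm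
        _ ≤ wted (subSize n v) * (fib c v - 1) := Nat.mul_le_mul_left _ (by omega)
    · rw [if_neg hv1, if_neg hv1, add_zero]
      by_cases hv2 : u = v
      · rw [if_pos hv2, if_pos hv2, hv2]
        calc wted (subSize n v) * (fib c v - 0 + 1 - 1)
            ≤ wted (subSize n v) * ((fib c v - 1) + 1) := Nat.mul_le_mul_left _ (by omega)
          _ = wted (subSize n v) * (fib c v - 1) + wted (subSize n v) := mul_add_one _ _
      · rw [if_neg hv2, if_neg hv2, add_zero, add_zero]
        exact Nat.mul_le_mul_left _ (by omega)
  have hsum := Finset.sum_le_sum key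
  rw [Finset.sum_add_distrib, Finset.sum_add_distrib] at hsum
  rw [Finset.sum_ite_eq (Finset.range n) (c a) (fun _ => wted (subSize n (c a)))] at hsum
  rw [Finset.sum_ite_eq (Finset.range n) u (fun _ => wted (subSize n u))] at hsum
  rw [if_pos (Finset.mem_range.mpr hca)] at hsum
  have hle : (if u ∈ Finset.range n then wted (subSize n u) else 0) ≤ wted (subSize n u) := by
    split
    · exact le_refl _
    · exact Nat.zero_le _
  exact le_trans hsum (Nat.add_le_add_left hle _)

theorem treeDelta_null {n p q : ℕ} (h : p ≠ q ∨ subSize n p ≤ 1) :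
    treeDelta n p q = (p, q) := by
  rw [treeDelta]
  rcases h with h | h
  · rw [if_neg h]
  · rw [if_neg (show ¬ (subSize n p % 2 = 0 ∧ subSize n p ≠ 0) by omega),
      if_neg (show ¬ 1 < subSize n p by omega)]
    split <;> rfl

theorem pstep_null {n : ℕ} (c : Fin n → ℕ) (pr : SchedPair n)
    (h : c pr.1.1 ≠ c pr.1.2 ∨ subSize n (c pr.1.1) ≤ 1) :
    pstep (treeDelta n) c pr = c := by
  funext a
  rw [pstep, treeDelta_null h]
  by_cases h1 : a = pr.1.1
  · rw [if_pos h1, h1]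
  · rw [if_neg h1]
    by_cases h2 : a = pr.1.2
    · rw [if_pos h2, h2]
    · rw [if_neg h2]

theorem pstep_prod_even {n : ℕ} (c : Fin n → ℕ) (pr : SchedPair n)
    (heq : c pr.1.1 = c pr.1.2) (hs : 2 ≤ subSize n (c pr.1.1))
    (he : subSize n (c pr.1.1) % 2 = 0) :
    pstep (treeDelta n) c pr = Function.update c pr.1.2 (c pr.1.2 + 1) := by
  have hδ : treeDelta n (c pr.1.1) (c pr.1.2) = (c pr.1.1, c pr.1.1 + 1) := by
    rw [treeDelta, if_pos heq, if_pos ⟨he, by omega⟩]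
  funext a
  rw [pstep, hδ, Function.update_apply]
  by_cases h1 : a = pr.1.1
  · have h2 : ¬ a = pr.1.2 := by rw [h1]; exact pr.2
    rw [if_pos h1, if_neg h2, h1]
  · rw [if_neg h1]
    by_cases h2 : a = pr.1.2
    · rw [if_pos h2, if_pos h2, heq]
    · rw [if_neg h2, if_neg h2]

theorem pstep_prod_odd {n : ℕ} (c : Fin n → ℕ) (pr : SchedPair n)
    (heq : c pr.1.1 = c pr.1.2) (hs : 2 ≤ subSize n (c pr.1.1))
    (ho : subSize n (c pr.1.1) % 2 = 1) :
    pstep (treeDelta n) c pr =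
      Function.update (Function.update c pr.1.1 (c pr.1.1 + 1)) pr.1.2
        (c pr.1.1 + subSize n (c pr.1.1) / 2 + 1) := by
  have hδ : treeDelta n (c pr.1.1) (c pr.1.2) =
      (c pr.1.1 + 1, c pr.1.1 + subSize n (c pr.1.1) / 2 + 1) := by
    rw [treeDelta, if_pos heq, if_neg (show ¬ (subSize n (c pr.1.1) % 2 = 0 ∧ _) by omega),
      if_pos (show 1 < subSize n (c pr.1.1) by omega)]
  funext a
  rw [pstep, hδ, Function.update_apply, Function.update_apply]
  by_cases h2 : a = pr.1.2
  · have h1 : ¬ a = pr.1.1 := by rw [h2]; exact fun h => pr.2 h.symm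
    rw [if_neg h1, if_pos h2, if_pos h2]
  · by_cases h1 : a = pr.1.1
    · rw [if_pos h1, if_neg h2, if_pos h1]
    · rw [if_neg h1, if_neg h2, if_neg h2, if_neg h1]

theorem lt_of_subSize_pos {n q : ℕ} (h : 0 < subSize n q) : q < n := by
  by_contra hcon
  rw [subSize_eq_zero n q (by omega)] at h
  omega

theorem pstep_lt {n : ℕ} (c : Fin n → ℕ) (hc : ∀ a, c a < n) (pr : SchedPair n) :
    ∀ a, pstep (treeDelta n) c pr a < n := by
  intro a
  by_cases hnull : c pr.1.1 ≠ c pr.1.2 ∨ subSize n (c pr.1.1) ≤ 1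
  · rw [pstep_null c pr hnull]; exact hc a
  · push_neg at hnull
    obtain ⟨heq, hs⟩ := hnull
    have hs2 : 2 ≤ subSize n (c pr.1.1) := hs
    rcases Nat.even_or_odd (subSize n (c pr.1.1)) with he | ho
    · have he' := Nat.even_iff.mp he
      rw [pstep_prod_even c pr heq hs2 he', Function.update_apply]
      split
      · apply lt_of_subSize_pos (n := n)
        have := ((subSize_children n (c pr.1.1) hs2).1 he')
        rw [← heq, this]
        omega
      · exact hc a
    · have ho' := Nat.odd_iff.mp ho
      rw [pstep_prod_odd c pr heq hs2 ho', Function.update_apply, Function.update_apply]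
      have hch := (subSize_children n (c pr.1.1) hs2).2 ho'
      split
      · apply lt_of_subSize_pos (n := n)
        rw [hch.2]
        omega
      · split
        · apply lt_of_subSize_pos (n := n)
          rw [hch.1]
          omega
        · exact hc a

theorem drift_pair {n : ℕ} (c : Fin n → ℕ) (hc : ∀ a, c a < n) (pr : SchedPair n)
    (heq : c pr.1.1 = c pr.1.2) (hs : 2 ≤ subSize n (c pr.1.1)) :
    3 * phi n (pstep (treeDelta n) c pr) + wted (subSize n (c pr.1.1)) ≤ 3 * phi n c := by
  classical
  have hfib : 2 ≤ fib c (c pr.1.1) := by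
    rw [fib]
    rw [show (2:ℕ) = 1 + 1 from rfl, Nat.add_one_le_iff]
    refine Finset.one_lt_card.mpr ⟨pr.1.1, ?_, pr.1.2, ?_, pr.2⟩
    · exact Finset.mem_filter.mpr ⟨Finset.mem_univ _, rfl⟩
    · exact Finset.mem_filter.mpr ⟨Finset.mem_univ _, heq.symm⟩
  rcases Nat.even_or_odd (subSize n (c pr.1.1)) with he | ho
  · have he' := Nat.even_iff.mp he
    rw [pstep_prod_even c pr heq hs he']
    have hstrong := phi_update_strong c pr.1.2 (c pr.1.2 + 1) (hc _)
      (by rw [← heq]; exact hfib) (by omega)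
    rw [← heq] at hstrong
    have hchild : subSize n (c pr.1.1 + 1) = subSize n (c pr.1.1) - 1 :=
      (subSize_children n (c pr.1.1) hs).1 he'
    rw [hchild] at hstrong
    rw [show c pr.1.2 + 1 = c pr.1.1 + 1 by rw [heq]]
    have hw : 3 * wted (subSize n (c pr.1.1) - 1) ≤ wted (subSize n (c pr.1.1)) :=
      wted_child_even hs he'
    omega
  · have ho' := Nat.odd_iff.mp ho
    rw [pstep_prod_odd c pr heq hs ho']
    have hch := (subSize_children n (c pr.1.1) hs).2 ho'
    have hstrong := phi_update_strong c pr.1.1 (c pr.1.1 + 1) (hc _) hfib (by omega)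
    rw [hch.1] at hstrong
    have hweak := phi_update_weak (Function.update c pr.1.1 (c pr.1.1 + 1)) pr.1.2
      (c pr.1.1 + subSize n (c pr.1.1) / 2 + 1)
    rw [hch.2] at hweak
    have hw : 3 * wted (subSize n (c pr.1.1) / 2) ≤ wted (subSize n (c pr.1.1)) :=
      wted_child_odd hs ho'
    omega

theorem phi_le_sum_w {n : ℕ} (c : Fin n → ℕ) (hc : ∀ a, c a < n) :
    phi n c ≤ ∑ pr ∈ (Finset.univ.filter fun pr : SchedPair n =>
        c pr.1.1 = c pr.1.2 ∧ 2 ≤ subSize n (c pr.1.1)), wted (subSize n (c pr.1.1)) := by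
  classical
  set D := Finset.univ.filter fun pr : SchedPair n =>
    c pr.1.1 = c pr.1.2 ∧ 2 ≤ subSize n (c pr.1.1) with hD
  rw [← Finset.sum_fiberwise_of_maps_to (g := fun pr : SchedPair n => c pr.1.1)
    (t := Finset.range n) (fun pr _ => Finset.mem_range.mpr (hc _))]
  refine Finset.sum_le_sum ?_
  intro v _
  have hconst : ∀ pr ∈ D.filter (fun pr : SchedPair n => c pr.1.1 = v),
      wted (subSize n (c pr.1.1)) = wted (subSize n v) := by
    intro pr hpr
    rw [(Finset.mem_filter.mp hpr).2]
  rw [Finset.sum_congr rfl hconst, Finset.sum_const, smul_eq_mul]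
  by_cases hw : wted (subSize n v) = 0
  · rw [hw]; omega
  · have hsv : 2 ≤ subSize n v := by
      by_contra hcon
      rw [wted, if_pos (by omega)] at hw
      exact hw rfl
    by_cases hfv : fib c v ≤ 1
    · have : fib c v - 1 = 0 := by omega
      rw [this]; omega
    · push_neg at hfv
      set F := Finset.univ.filter (fun a : Fin n => c a = v) with hF
      obtain ⟨a₀, ha₀⟩ : ∃ a₀, a₀ ∈ F := Finset.card_pos.mp (by
        rw [hF]; rw [fib] at hfv; omega) |>.imp (fun a ha => ha) |> fun h => h
      have hca₀ : c a₀ = v := (Finset.mem_filter.mp ha₀).2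
      have hsub : F.erase a₀ ⊆ Finset.image (fun pr : SchedPair n => pr.1.2)
          (D.filter (fun pr : SchedPair n => c pr.1.1 = v)) := by
        intro b hb
        have hbne : b ≠ a₀ := Finset.ne_of_mem_erase hb
        have hcb : c b = v := (Finset.mem_filter.mp (Finset.mem_of_mem_erase hb)).2
        refine Finset.mem_image.mpr ⟨⟨(a₀, b), fun h => hbne (by simpa using h.symm)⟩, ?_, rfl⟩
        refine Finset.mem_filter.mpr ⟨Finset.mem_filter.mpr ⟨Finset.mem_univ _, ?_, ?_⟩, ?_⟩
        · show c a₀ = c b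
          rw [hca₀, hcb]
        · show 2 ≤ subSize n (c a₀)
          rw [hca₀]; exact hsv
        · exact hca₀
      have hcard : fib c v - 1 ≤ (D.filter (fun pr : SchedPair n => c pr.1.1 = v)).card := by
        have h1 : (F.erase a₀).card = fib c v - 1 := by
          rw [Finset.card_erase_of_mem ha₀]
          rfl
        calc fib c v - 1 = (F.erase a₀).card := h1.symm
          _ ≤ (Finset.image (fun pr : SchedPair n => pr.1.2)
              (D.filter (fun pr : SchedPair n => c pr.1.1 = v))).card :=
            Finset.card_le_card hsub
          _ ≤ _ := Finset.card_image_le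
      calc wted (subSize n v) * (fib c v - 1)
          ≤ wted (subSize n v) * (D.filter (fun pr : SchedPair n => c pr.1.1 = v)).card :=
          Nat.mul_le_mul_left _ hcard
        _ = _ := Nat.mul_comm _ _

theorem drift_sum {n : ℕ} (c : Fin n → ℕ) (hc : ∀ a, c a < n) :
    (∑ pr : SchedPair n, 3 * phi n (pstep (treeDelta n) c pr)) + phi n c ≤
      3 * (Finset.univ : Finset (SchedPair n)).card * phi n c := by
  classical
  set p := fun pr : SchedPair n => c pr.1.1 = c pr.1.2 ∧ 2 ≤ subSize n (c pr.1.1) with hp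
  set D := Finset.univ.filter p with hD
  have hsplit : (∑ pr ∈ D, 3 * phi n (pstep (treeDelta n) c pr)) +
      (∑ pr ∈ Finset.univ.filter (fun pr => ¬ p pr), 3 * phi n (pstep (treeDelta n) c pr)) =
      ∑ pr : SchedPair n, 3 * phi n (pstep (treeDelta n) c pr) :=
    Finset.sum_filter_add_sum_filter_not _ _ _
  have hnull : ∀ pr ∈ Finset.univ.filter (fun pr => ¬ p pr),
      3 * phi n (pstep (treeDelta n) c pr) = 3 * phi n c := by
    intro pr hpr
    have hnp := (Finset.mem_filter.mp hpr).2
    have hdis : c pr.1.1 ≠ c pr.1.2 ∨ subSize n (c pr.1.1) ≤ 1 := by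
      by_cases h : c pr.1.1 = c pr.1.2
      · right
        by_contra hcon
        exact hnp ⟨h, by omega⟩
      · left; exact h
    rw [pstep_null c pr hdis]
  have h1 : (∑ pr ∈ Finset.univ.filter (fun pr => ¬ p pr),
      3 * phi n (pstep (treeDelta n) c pr)) =
      (Finset.univ.filter (fun pr => ¬ p pr)).card * (3 * phi n c) := by
    rw [Finset.sum_congr rfl hnull, Finset.sum_const, smul_eq_mul]
  have h2 : (∑ pr ∈ D, 3 * phi n (pstep (treeDelta n) c pr)) +
      (∑ pr ∈ D, wted (subSize n (c pr.1.1))) ≤ D.card * (3 * phi n c) := by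
    rw [← Finset.sum_add_distrib]
    calc ∑ pr ∈ D, (3 * phi n (pstep (treeDelta n) c pr) + wted (subSize n (c pr.1.1)))
        ≤ ∑ _pr ∈ D, 3 * phi n c := by
          refine Finset.sum_le_sum ?_
          intro pr hpr
          have hmem := (Finset.mem_filter.mp hpr).2
          rw [hp] at hmem
          exact drift_pair c hc pr hmem.1 hmem.2
      _ = D.card * (3 * phi n c) := by rw [Finset.sum_const, smul_eq_mul]
  have h3 : phi n c ≤ ∑ pr ∈ D, wted (subSize n (c pr.1.1)) := phi_le_sum_w c hc
  have h4 : D.card + (Finset.univ.filter (fun pr => ¬ p pr)).card =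
      (Finset.univ : Finset (SchedPair n)).card := by
    rw [hD]
    exact Finset.card_filter_add_card_filter_not _
  have h5 : D.card * (3 * phi n c) + (Finset.univ.filter (fun pr => ¬ p pr)).card * (3 * phi n c)
      = 3 * (Finset.univ : Finset (SchedPair n)).card * phi n c := by
    rw [← Nat.add_mul, h4]
    ring
  omega

theorem foldl_lt {n : ℕ} : ∀ (L : List (SchedPair n)) (c : Fin n → ℕ), (∀ a, c a < n) →
    ∀ a, (L.foldl (pstep (treeDelta n)) c) a < n
  | [], _, hc => hc
  | p :: L, c, hc => foldl_lt L _ (pstep_lt c hc p)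

theorem exp_drift {n : ℕ} : ∀ (T : ℕ) (c0 : Fin n → ℕ), (∀ a, c0 a < n) →
    (∑ σ : Fin T → SchedPair n, 3 ^ T * phi n ((List.ofFn σ).foldl (pstep (treeDelta n)) c0))
      ≤ (3 * (Finset.univ : Finset (SchedPair n)).card - 1) ^ T * phi n c0 := by
  intro T
  induction T with
  | zero =>
    intro c0 hc0
    simp
  | succ T ih =>
    intro c0 hc0
    set N := (Finset.univ : Finset (SchedPair n)).card with hN
    have step1 : (∑ σ : Fin (T+1) → SchedPair n,
        3 ^ (T+1) * phi n ((List.ofFn σ).foldl (pstep (treeDelta n)) c0))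
        = ∑ p : SchedPair n, ∑ σ : Fin T → SchedPair n,
            3 ^ (T+1) * phi n ((List.ofFn σ).foldl (pstep (treeDelta n))
              (pstep (treeDelta n) c0 p)) := by
      rw [Fintype.sum_equiv (Fin.consEquiv (fun _ : Fin (T+1) => SchedPair n)).symm
        (fun σ => 3 ^ (T+1) * phi n ((List.ofFn σ).foldl (pstep (treeDelta n)) c0))
        (fun ps => 3 ^ (T+1) * phi n ((List.ofFn ps.2).foldl (pstep (treeDelta n))
          (pstep (treeDelta n) c0 ps.1)))
        (fun σ => by
          show 3 ^ (T+1) * phi n ((List.ofFn σ).foldl (pstep (treeDelta n)) c0) = _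
          rw [List.ofFn_succ]
          rfl)]
      exact Fintype.sum_prod_type _
    have hd := drift_sum c0 hc0
    have h3S : 3 * (∑ p : SchedPair n, phi n (pstep (treeDelta n) c0 p)) ≤
        (3 * N - 1) * phi n c0 := by
      rw [Nat.sub_mul, one_mul, Finset.mul_sum]
      have : (∑ p : SchedPair n, 3 * phi n (pstep (treeDelta n) c0 p)) ≤
          3 * N * phi n c0 - phi n c0 := Nat.le_sub_of_add_le hd
      exact this
    calc (∑ σ : Fin (T+1) → SchedPair n,
        3 ^ (T+1) * phi n ((List.ofFn σ).foldl (pstep (treeDelta n)) c0))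
        = ∑ p : SchedPair n, ∑ σ : Fin T → SchedPair n,
            3 ^ (T+1) * phi n ((List.ofFn σ).foldl (pstep (treeDelta n))
              (pstep (treeDelta n) c0 p)) := step1
      _ = ∑ p : SchedPair n, 3 * ∑ σ : Fin T → SchedPair n,
            3 ^ T * phi n ((List.ofFn σ).foldl (pstep (treeDelta n))
              (pstep (treeDelta n) c0 p)) := by
          refine Finset.sum_congr rfl fun p _ => ?_
          rw [Finset.mul_sum]
          refine Finset.sum_congr rfl fun σ _ => ?_
          ring
      _ ≤ ∑ p : SchedPair n, 3 * ((3 * N - 1) ^ T * phi n (pstep (treeDelta n) c0 p)) := by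
          refine Finset.sum_le_sum fun p _ => ?_
          exact Nat.mul_le_mul_left 3 (ih _ (pstep_lt c0 hc0 p))
      _ = (3 * N - 1) ^ T * (3 * ∑ p : SchedPair n, phi n (pstep (treeDelta n) c0 p)) := by
          rw [Finset.mul_sum, Finset.mul_sum]
          refine Finset.sum_congr rfl fun p _ => ?_
          ring
      _ ≤ (3 * N - 1) ^ T * ((3 * N - 1) * phi n c0) := Nat.mul_le_mul_left _ h3S
      _ = (3 * N - 1) ^ (T+1) * phi n c0 := by ring

theorem silent_of_phi_zero {n : ℕ} (c : Fin n → ℕ) (hc : ∀ a, c a < n) (h : phi n c = 0) :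
    ∀ pr, pstep (treeDelta n) c pr = c := by
  intro pr
  by_cases hd : c pr.1.1 ≠ c pr.1.2 ∨ subSize n (c pr.1.1) ≤ 1
  · exact pstep_null c pr hd
  · exfalso
    push_neg at hd
    obtain ⟨heq, hs'⟩ := hd
    have hs : 2 ≤ subSize n (c pr.1.1) := hs'
    have hfib : 2 ≤ fib c (c pr.1.1) := by
      rw [fib]
      rw [show (2:ℕ) = 1 + 1 from rfl, Nat.add_one_le_iff]
      refine Finset.one_lt_card.mpr ⟨pr.1.1, ?_, pr.1.2, ?_, pr.2⟩
      · exact Finset.mem_filter.mpr ⟨Finset.mem_univ _, rfl⟩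
      · exact Finset.mem_filter.mpr ⟨Finset.mem_univ _, heq.symm⟩
    have hw : 1 ≤ wted (subSize n (c pr.1.1)) := wted_pos hs
    rw [phi] at h
    have hterm := (Finset.sum_eq_zero_iff.mp h) (c pr.1.1) (Finset.mem_range.mpr (hc _))
    rcases Nat.mul_eq_zero.mp hterm with h1 | h1 <;> omega

theorem configAt_zero {S : Type} {n T : ℕ} (δ : S → S → S × S) (c0 : Fin n → S)
    (σ : Fin T → SchedPair n) : configAt δ c0 σ 0 = c0 := rfl

theorem configAt_succ {S : Type} {n T : ℕ} (δ : S → S → S × S) (c0 : Fin n → S)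
    (σ : Fin T → SchedPair n) (t : ℕ) (ht : t < T) :
    configAt δ c0 σ (t+1) = pstep δ (configAt δ c0 σ t) (σ ⟨t, ht⟩) := by
  rw [configAt, configAt, List.take_succ, List.foldl_append]
  have : (List.ofFn σ)[t]? = some (σ ⟨t, ht⟩) := by
    rw [List.getElem?_eq_getElem (by simpa using ht)]
    simp
  rw [this]
  rfl

theorem configAt_top {S : Type} {n T : ℕ} (δ : S → S → S × S) (c0 : Fin n → S)
    (σ : Fin T → SchedPair n) :
    configAt δ c0 σ T = (List.ofFn σ).foldl (pstep δ) c0 := by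
  rw [configAt, List.take_of_length_le (by simp)]

theorem bad_count {n : ℕ} (c0 : Fin n → ℕ) (hc0 : ∀ a, c0 a < n) (T : ℕ) :
    ((Finset.univ : Finset (Fin T → SchedPair n)).filter
        (fun σ => ¬ phi n (configAt (treeDelta n) c0 σ T) = 0)).card * 3 ^ T ≤
      (3 * (Finset.univ : Finset (SchedPair n)).card - 1) ^ T * phi n c0 := by
  classical
  set Bad := (Finset.univ : Finset (Fin T → SchedPair n)).filter
    (fun σ => ¬ phi n (configAt (treeDelta n) c0 σ T) = 0) with hBad
  calc Bad.card * 3 ^ T = ∑ _σ ∈ Bad, 3 ^ T := by rw [Finset.sum_const, smul_eq_mul]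
    _ ≤ ∑ σ ∈ Bad, 3 ^ T * phi n (configAt (treeDelta n) c0 σ T) := by
        refine Finset.sum_le_sum fun σ hσ => ?_
        have := (Finset.mem_filter.mp hσ).2
        exact Nat.le_mul_of_pos_right _ (by omega)
    _ ≤ ∑ σ : Fin T → SchedPair n, 3 ^ T * phi n (configAt (treeDelta n) c0 σ T) :=
        Finset.sum_le_sum_of_subset (Finset.filter_subset _ _)
    _ = ∑ σ : Fin T → SchedPair n,
          3 ^ T * phi n ((List.ofFn σ).foldl (pstep (treeDelta n)) c0) := by
        refine Finset.sum_congr rfl fun σ _ => ?_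
        rw [configAt_top]
    _ ≤ _ := exp_drift T c0 hc0

/-- A canonical enumeration of all ordered pairs. -/
noncomputable def cycleList (n : ℕ) : List (SchedPair n) :=
  (Finset.univ : Finset (SchedPair n)).toList

theorem cycleList_length_pos {n : ℕ} (hn : 2 ≤ n) : 0 < (cycleList n).length := by
  rw [cycleList, Finset.length_toList, Finset.card_univ, Fintype.card_pos_iff]
  refine ⟨⟨(⟨0, by omega⟩, ⟨1, by omega⟩), ?_⟩⟩
  intro h
  rw [Fin.mk.injEq] at h
  omega

/-- Extension of a finite schedule to a fair infinite schedule. -/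
noncomputable def extSched {n T : ℕ} (hn : 2 ≤ n) (σ : Fin T → SchedPair n) :
    ℕ → SchedPair n := fun t =>
  if h : t < T then σ ⟨t, h⟩
  else (cycleList n).get ⟨(t - T) % (cycleList n).length,
    Nat.mod_lt _ (cycleList_length_pos hn)⟩

theorem extSched_fair {n T : ℕ} (hn : 2 ≤ n) (σ : Fin T → SchedPair n) :
    Fair (extSched hn σ) := by
  intro pr t
  have hlen : 0 < (cycleList n).length := cycleList_length_pos hn
  have hmem : pr ∈ cycleList n := by
    rw [cycleList]
    exact Finset.mem_toList.mpr (Finset.mem_univ _)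
  obtain ⟨i, hi⟩ := List.mem_iff_get.mp hmem
  refine ⟨T + (i.1 + (cycleList n).length * t), ?_, ?_⟩
  · have : t ≤ (cycleList n).length * t := Nat.le_mul_of_pos_left t hlen
    omega
  · rw [extSched, dif_neg (by omega)]
    have harith : (T + (i.1 + (cycleList n).length * t) - T) % (cycleList n).length = i.1 := by
      rw [Nat.add_sub_cancel_left, Nat.add_mul_mod_self_left]
      exact Nat.mod_eq_of_lt i.isLt
    exact (congrArg (cycleList n).get (Fin.ext harith)).trans hi

theorem extSched_prefix {n T : ℕ} (hn : 2 ≤ n) (σ : Fin T → SchedPair n)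
    (c0 : Fin n → ℕ) :
    ∀ t, t ≤ T → ptraj (treeDelta n) c0 (extSched hn σ) t = configAt (treeDelta n) c0 σ t := by
  intro t
  induction t with
  | zero => intro _; rfl
  | succ t iht =>
    intro ht
    have ht' : t < T := by omega
    show pstep (treeDelta n) (ptraj (treeDelta n) c0 (extSched hn σ) t) (extSched hn σ t) = _
    rw [iht (by omega), extSched, dif_pos ht', configAt_succ (treeDelta n) c0 σ t ht']

theorem silent_tail {S : Type} {n : ℕ} (δ : S → S → S × S) (c0 : Fin n → S)
    (σ' : ℕ → SchedPair n) (t0 : ℕ)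
    (hsil : ∀ pr, pstep δ (ptraj δ c0 σ' t0) pr = ptraj δ c0 σ' t0) :
    ∀ t, t0 ≤ t → ptraj δ c0 σ' t = ptraj δ c0 σ' t0 := by
  intro t
  induction t with
  | zero => intro ht; rw [Nat.le_zero.mp ht]
  | succ t iht =>
    intro ht
    rcases Nat.lt_or_ge t0 (t+1) with h | h
    · show pstep δ (ptraj δ c0 σ' t) (σ' t) = _
      rw [iht (by omega)]
      exact hsil _
    · rw [Nat.le_antisymm ht h]

theorem det_balanced {n T : ℕ} (hn : 2 ≤ n) (c0 : Fin n → ℕ) (hc0 : ∀ a, c0 a < n)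
    (P : List ℕ) (hB : BalancedPath n c0 P) (σ : Fin T → SchedPair n)
    (hphi : phi n (configAt (treeDelta n) c0 σ T) = 0) :
    ∃ t ≤ T, ∀ p ∈ P, ∃! a, configAt (treeDelta n) c0 σ t a = p := by
  refine ⟨T, le_refl T, ?_⟩
  have hpre : ptraj (treeDelta n) c0 (extSched hn σ) T = configAt (treeDelta n) c0 σ T :=
    extSched_prefix hn σ c0 T (le_refl T)
  have hInv : ∀ a, configAt (treeDelta n) c0 σ T a < n := by
    rw [configAt_top]
    exact foldl_lt _ _ hc0
  have hsil : ∀ pr, pstep (treeDelta n) (ptraj (treeDelta n) c0 (extSched hn σ) T) pr =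
      ptraj (treeDelta n) c0 (extSched hn σ) T := by
    rw [hpre]
    exact silent_of_phi_zero _ hInv hphi
  obtain ⟨T0, hT0⟩ := hB (extSched hn σ) (extSched_fair hn σ)
  have hkey := hT0 (max T0 T) (le_max_left _ _)
  have htail := silent_tail (treeDelta n) c0 (extSched hn σ) T hsil (max T0 T) (le_max_right _ _)
  rw [htail, hpre] at hkey
  exact hkey

theorem det_overloaded {n T : ℕ} (hn : 2 ≤ n) (c0 : Fin n → ℕ) (hc0 : ∀ a, c0 a < n)
    (lf : ℕ) (hO : OverloadedPath n c0 lf) (σ : Fin T → SchedPair n)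
    (hphi : phi n (configAt (treeDelta n) c0 σ T) = 0) :
    ∃ t ≤ T, ∃ a b : Fin n, a ≠ b ∧
      configAt (treeDelta n) c0 σ t a = lf ∧ configAt (treeDelta n) c0 σ t b = lf := by
  have hpre : ptraj (treeDelta n) c0 (extSched hn σ) T = configAt (treeDelta n) c0 σ T :=
    extSched_prefix hn σ c0 T (le_refl T)
  have hInv : ∀ a, configAt (treeDelta n) c0 σ T a < n := by
    rw [configAt_top]
    exact foldl_lt _ _ hc0
  have hsil : ∀ pr, pstep (treeDelta n) (ptraj (treeDelta n) c0 (extSched hn σ) T) pr =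
      ptraj (treeDelta n) c0 (extSched hn σ) T := by
    rw [hpre]
    exact silent_of_phi_zero _ hInv hphi
  obtain ⟨t, a, b, hab, ha, hb⟩ := hO (extSched hn σ) (extSched_fair hn σ)
  rcases le_or_gt t T with h | h
  · rw [extSched_prefix hn σ c0 t h] at ha hb
    exact ⟨t, h, a, b, hab, ha, hb⟩
  · have htail := silent_tail (treeDelta n) c0 (extSched hn σ) T hsil t (by omega)
    rw [htail, hpre] at ha hb
    exact ⟨T, le_refl T, a, b, hab, ha, hb⟩

theorem phi_le {n : ℕ} (hn : 2 ≤ n) (c0 : Fin n → ℕ) (hc0 : ∀ a, c0 a < n) :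
    phi n c0 ≤ 48 * n ^ 5 := by
  classical
  have hfibsum : ∑ v ∈ Finset.range n, fib c0 v = n := by
    have := Finset.card_eq_sum_card_fiberwise
      (f := c0) (s := (Finset.univ : Finset (Fin n))) (t := Finset.range n)
      (fun a _ => Finset.mem_range.mpr (hc0 a))
    rw [Finset.card_univ, Fintype.card_fin] at this
    simpa [fib] using this.symm
  calc phi n c0 ≤ ∑ v ∈ Finset.range n, 48 * n ^ 4 * fib c0 v := by
        refine Finset.sum_le_sum fun v _ => ?_
        exact Nat.mul_le_mul (wted_le hn (subSize_le n v)) (Nat.sub_le _ _)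
    _ = 48 * n ^ 4 * ∑ v ∈ Finset.range n, fib c0 v := by rw [Finset.mul_sum]
    _ = 48 * n ^ 5 := by rw [hfibsum]; ring

set_option maxHeartbeats 1000000 in
theorem whp_bound {n : ℕ} (hn : 2 ≤ n) (c0 : Fin n → ℕ) (hc0 : ∀ a, c0 a < n) (T : ℕ)
    (hT : (100 : ℝ) * n * Real.log n * n ≤ T)
    (E : (Fin T → SchedPair n) → Prop)
    (hE : ∀ σ, phi n (configAt (treeDelta n) c0 σ T) = 0 → E σ) :
    schedPr T E ≥ 1 - (n : ℝ) ^ (-(1:ℝ)) := by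
  classical
  set N := (Finset.univ : Finset (SchedPair n)).card with hN
  have hN1 : 1 ≤ N := by
    have := cycleList_length_pos hn
    rw [cycleList, Finset.length_toList] at this
    omega
  have hNn : N ≤ n ^ 2 := by
    rw [hN, Finset.card_univ]
    calc Fintype.card (SchedPair n) ≤ Fintype.card (Fin n × Fin n) := Fintype.card_subtype_le _
      _ = n ^ 2 := by rw [Fintype.card_prod, Fintype.card_fin]; ring
  have hcardU : ((Finset.univ : Finset (Fin T → SchedPair n))).card = N ^ T := by
    rw [Finset.card_univ, Fintype.card_fun, Fintype.card_fin, hN, Finset.card_univ]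
  set B := ((Finset.univ : Finset (Fin T → SchedPair n)).filter
    (fun σ => ¬ phi n (configAt (treeDelta n) c0 σ T) = 0)).card with hB
  have hBle : B ≤ N ^ T := by
    rw [hB, ← hcardU]
    exact Finset.card_filter_le _ _
  have hGE : N ^ T - B ≤ ((Finset.univ : Finset (Fin T → SchedPair n)).filter
      (fun σ => E σ)).card := by
    have hsub : ((Finset.univ : Finset (Fin T → SchedPair n)).filter
        (fun σ => phi n (configAt (treeDelta n) c0 σ T) = 0)) ⊆
        (Finset.univ : Finset (Fin T → SchedPair n)).filter (fun σ => E σ) := by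
      intro σ hσ
      exact Finset.mem_filter.mpr ⟨Finset.mem_univ _, hE σ (Finset.mem_filter.mp hσ).2⟩
    have hcount := Finset.card_filter_add_card_filter_not
      (s := (Finset.univ : Finset (Fin T → SchedPair n)))
      (p := fun σ => phi n (configAt (treeDelta n) c0 σ T) = 0)
    rw [hcardU] at hcount
    have := Finset.card_le_card hsub
    omega
  -- real-number estimates
  have hn0 : (0:ℝ) < n := by positivity
  have hn2 : (2:ℝ) ≤ n := by exact_mod_cast hn
  have hNr1 : (1:ℝ) ≤ (N:ℝ) := by exact_mod_cast hN1
  have hNrpos : (0:ℝ) < 3 * (N:ℝ) := by linarith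
  have hNTpos : (0:ℝ) < (N:ℝ) ^ T := by positivity
  have hBre : (B:ℝ) * 3 ^ T ≤ (3 * (N:ℝ) - 1) ^ T * (phi n c0 : ℝ) := by
    have hcast : ((3 * N - 1 : ℕ) : ℝ) = 3 * (N:ℝ) - 1 := by
      rw [Nat.cast_sub (by omega)]
      push_cast
      ring
    have hbc := bad_count c0 hc0 T
    rw [← hN] at hbc
    calc (B:ℝ) * 3 ^ T = ((B * 3 ^ T : ℕ) : ℝ) := by push_cast; ring
      _ ≤ (((3 * N - 1) ^ T * phi n c0 : ℕ) : ℝ) := by exact_mod_cast hbc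
      _ = (3 * (N:ℝ) - 1) ^ T * (phi n c0 : ℝ) := by
          push_cast [Nat.cast_sub (show 1 ≤ 3 * N by omega)]
          ring
  have h1 : (B:ℝ) ≤ (3 * (N:ℝ) - 1) ^ T * (phi n c0 : ℝ) / 3 ^ T := by
    rw [le_div_iff₀ (by positivity : (0:ℝ) < (3:ℝ) ^ T)]
    exact hBre
  have hfrac : (B:ℝ) / (N:ℝ) ^ T ≤
      (phi n c0 : ℝ) * ((3 * (N:ℝ) - 1) / (3 * (N:ℝ))) ^ T := by
    rw [div_le_iff₀ hNTpos, div_pow, mul_pow]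
    calc (B:ℝ) ≤ (3 * (N:ℝ) - 1) ^ T * (phi n c0 : ℝ) / 3 ^ T := h1
      _ = (phi n c0 : ℝ) * ((3 * (N:ℝ) - 1) ^ T / ((3:ℝ) ^ T * (N:ℝ) ^ T)) * (N:ℝ) ^ T := by
          field_simp
  have hbase0 : (0:ℝ) ≤ (3 * (N:ℝ) - 1) / (3 * (N:ℝ)) := by
    apply div_nonneg <;> linarith
  have hbase_le : (3 * (N:ℝ) - 1) / (3 * (N:ℝ)) ≤ Real.exp (-(1 / (3 * (N:ℝ)))) := by
    have hexp := Real.add_one_le_exp (-(1 / (3 * (N:ℝ))))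
    have heq : (3 * (N:ℝ) - 1) / (3 * (N:ℝ)) = 1 - 1 / (3 * (N:ℝ)) := by
      field_simp
    rw [heq]
    linarith
  have hpow : ((3 * (N:ℝ) - 1) / (3 * (N:ℝ))) ^ T ≤ Real.exp (-(T / (3 * (N:ℝ)))) := by
    calc ((3 * (N:ℝ) - 1) / (3 * (N:ℝ))) ^ T ≤ (Real.exp (-(1 / (3 * (N:ℝ))))) ^ T :=
          pow_le_pow_left₀ hbase0 hbase_le T
      _ = Real.exp ((T:ℝ) * (-(1 / (3 * (N:ℝ))))) := (Real.exp_nat_mul _ T).symm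
      _ = Real.exp (-(T / (3 * (N:ℝ)))) := by
          congr 1
          ring
  have hTb : 12 * Real.log n ≤ (T:ℝ) / (3 * (N:ℝ)) := by
    rw [le_div_iff₀ hNrpos]
    have hNr2 : (N:ℝ) ≤ (n:ℝ) ^ 2 := by exact_mod_cast hNn
    have hlog0 : 0 ≤ Real.log n := Real.log_nonneg (by linarith)
    have hmul : (N:ℝ) * Real.log n ≤ (n:ℝ) ^ 2 * Real.log n :=
      mul_le_mul_of_nonneg_right hNr2 hlog0
    nlinarith [hT]
  have hexp2 : Real.exp (-(T / (3 * (N:ℝ)))) ≤ Real.exp (-(12 * Real.log n)) :=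
    Real.exp_le_exp.mpr (by linarith)
  have hexpval : Real.exp (-(12 * Real.log n)) = ((n:ℝ)⁻¹) ^ (12:ℕ) := by
    rw [show -(12 * Real.log n) = (12:ℕ) * (-Real.log n) by push_cast; ring,
      Real.exp_nat_mul, Real.exp_neg, Real.exp_log hn0]
  have hphi : (phi n c0 : ℝ) ≤ 48 * (n:ℝ) ^ 5 := by
    have := phi_le hn c0 hc0
    exact_mod_cast this
  have hphi0 : (0:ℝ) ≤ (phi n c0 : ℝ) := by positivity
  have h6 : (64:ℝ) ≤ (n:ℝ) ^ 6 := by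
    calc (64:ℝ) = 2 ^ 6 := by norm_num
      _ ≤ (n:ℝ) ^ 6 := pow_le_pow_left₀ (by norm_num) hn2 6
  have hfinal : (B:ℝ) / (N:ℝ) ^ T ≤ (n:ℝ)⁻¹ := by
    have hstep : (B:ℝ) / (N:ℝ) ^ T ≤ 48 * (n:ℝ) ^ 5 * ((n:ℝ)⁻¹) ^ (12:ℕ) := by
      calc (B:ℝ) / (N:ℝ) ^ T ≤ (phi n c0 : ℝ) * ((3 * (N:ℝ) - 1) / (3 * (N:ℝ))) ^ T := hfrac
        _ ≤ (phi n c0 : ℝ) * (((n:ℝ)⁻¹) ^ (12:ℕ)) := by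
            refine mul_le_mul_of_nonneg_left ?_ hphi0
            rw [← hexpval]
            exact le_trans hpow hexp2
        _ ≤ 48 * (n:ℝ) ^ 5 * ((n:ℝ)⁻¹) ^ (12:ℕ) := by
            refine mul_le_mul_of_nonneg_right hphi ?_
            positivity
    refine le_trans hstep ?_
    rw [inv_pow, ← div_eq_mul_inv, div_le_iff₀ (by positivity : (0:ℝ) < (n:ℝ) ^ (12:ℕ))]
    have hid : (n:ℝ)⁻¹ * (n:ℝ) ^ (12:ℕ) = (n:ℝ) ^ (11:ℕ) := by
      field_simp
    rw [hid]
    nlinarith [mul_le_mul_of_nonneg_right h6 (le_of_lt (pow_pos hn0 5)), pow_pos hn0 5]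
  -- assemble
  rw [schedPr, hcardU, ge_iff_le]
  have hcast2 : ((N ^ T : ℕ) : ℝ) = (N:ℝ) ^ T := by push_cast; ring
  rw [hcast2]
  have hrpow : (n:ℝ) ^ (-(1:ℝ)) = (n:ℝ)⁻¹ := by
    rw [Real.rpow_neg (le_of_lt hn0), Real.rpow_one]
  rw [hrpow]
  calc 1 - (n:ℝ)⁻¹ ≤ 1 - (B:ℝ) / (N:ℝ) ^ T := by linarith
    _ = ((N:ℝ) ^ T - (B:ℝ)) / (N:ℝ) ^ T := by
        rw [sub_div, div_self (ne_of_gt hNTpos)]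
    _ ≤ _ := by
        refine (div_le_div_iff_of_pos_right hNTpos).mpr ?_
        have hc : ((N ^ T - B : ℕ) : ℝ) = (N:ℝ) ^ T - (B:ℝ) := by
          rw [Nat.cast_sub hBle]
          push_cast
          ring
        calc (N:ℝ) ^ T - (B:ℝ) = ((N ^ T - B : ℕ) : ℝ) := hc.symm
          _ ≤ _ := by exact_mod_cast hGE
/-- Consider an arbitrary root-to-leaf path of the tree of ranks under
the ranking protocol based on rule `R₁` with the uniform random scheduler on `n`
agents. If the path is balanced, then whp within parallel time `O(n·log n)` each
node of the path is occupied by exactly one agent; if the path is overloaded, then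
whp within parallel time `O(n·log n)` the leaf of the path becomes overloaded. -/
theorem tree_path_progress_whp :
    ∃ c η : ℝ, 0 < c ∧ 0 < η ∧
      ∀ n : ℕ, 2 ≤ n → ∀ (P : List ℕ) (lf : ℕ), RootToLeaf n P lf →
        ∀ c0 : Fin n → ℕ, (∀ i, c0 i < n) →
          ∀ T : ℕ, T = Nat.ceil (c * (n : ℝ) * Real.log n * (n : ℝ)) →
            (BalancedPath n c0 P →
              schedPr T (fun σ : Fin T → SchedPair n =>
                  ∃ t ≤ T, ∀ p ∈ P, ∃! a, configAt (treeDelta n) c0 σ t a = p) ≥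
                1 - (n : ℝ) ^ (-η)) ∧
            (OverloadedPath n c0 lf →
              schedPr T (fun σ : Fin T → SchedPair n =>
                  ∃ t ≤ T, ∃ a b : Fin n, a ≠ b ∧
                    configAt (treeDelta n) c0 σ t a = lf ∧
                    configAt (treeDelta n) c0 σ t b = lf) ≥
                1 - (n : ℝ) ^ (-η)) := by
  refine ⟨100, 1, by norm_num, by norm_num, ?_⟩
  intro n hn P lf _hRT c0 hc0 T hTdef
  have hT : (100 : ℝ) * n * Real.log n * n ≤ T := by
    rw [hTdef]
    exact Nat.le_ceil _
  constructor
  · intro hB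
    exact whp_bound hn c0 hc0 T hT _ (fun σ h => det_balanced hn c0 hc0 P hB σ h)
  · intro hO
    exact whp_bound hn c0 hc0 T hT _ (fun σ h => det_overloaded hn c0 hc0 lf hO σ h)
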